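/- The second higher Mahler measure satisfies m₂(x−1) := ∫_0^1 log²|e^{2πiθ}−1| dθ = π²/12. -/

import Mathlib

open Real MeasureTheory Filter Topology



lemma cos_int_integral (m : ℤ) (hm : m ≠ 0) :
    ∫ θ in (0:ℝ)..1, Real.cos (2 * π * m * θ) = 0 := by
  have hc : (2 * π * m : ℝ) ≠ 0 :=
    mul_ne_zero (mul_ne_zero two_ne_zero Real.pi_ne_zero) (Int.cast_ne_zero.mpr hm)
  have h := intervalIntegral.integral_comp_mul_left (a := (0:ℝ)) (b := 1)
    (fun x => Real.cos x) hc
  simp only [mul_zero, mul_one] at h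
  rw [h, integral_cos]
  have : Real.sin (2 * π * m) = 0 := by
    have h2 := Real.sin_int_mul_pi (2 * m)
    push_cast at h2 ⊢
    rw [show (2:ℝ) * π * m = 2 * m * π by ring]
    exact h2
  simp [this]

lemma cos_orth (j k : ℕ) (hj : j ≠ 0) (hk : k ≠ 0) :
    ∫ θ in (0:ℝ)..1, Real.cos (2 * π * j * θ) * Real.cos (2 * π * k * θ)
      = if j = k then 1/2 else 0 := by
  have key : ∀ θ : ℝ, Real.cos (2 * π * j * θ) * Real.cos (2 * π * k * θ)
      = (Real.cos (2 * π * (((j:ℤ) - (k:ℤ) : ℤ) : ℝ) * θ)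
          + Real.cos (2 * π * (((j:ℤ) + (k:ℤ) : ℤ) : ℝ) * θ)) / 2 := by
    intro θ
    have h := Real.two_mul_cos_mul_cos (2 * π * j * θ) (2 * π * k * θ)
    rw [show 2 * π * (((j:ℤ) - (k:ℤ) : ℤ) : ℝ) * θ = 2 * π * j * θ - 2 * π * k * θ by
        push_cast; ring,
      show 2 * π * (((j:ℤ) + (k:ℤ) : ℤ) : ℝ) * θ = 2 * π * j * θ + 2 * π * k * θ by
        push_cast; ring]
    linarith [h]
  simp_rw [key]
  have hint : ∀ m : ℤ, IntervalIntegrable (fun θ : ℝ => Real.cos (2 * π * m * θ)) volume 0 1 :=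
    fun m => (Real.continuous_cos.comp (by continuity)).intervalIntegrable 0 1
  rw [intervalIntegral.integral_div, intervalIntegral.integral_add (hint _) (hint _)]
  rw [cos_int_integral ((j:ℤ) + k) (by positivity)]
  by_cases h : j = k
  · subst h
    simp only [sub_self]
    norm_num
  · rw [cos_int_integral ((j:ℤ) - k) (by
      intro hc
      exact h (by exact_mod_cast sub_eq_zero.mp hc))]
    simp [h]


noncomputable def Ec (θ : ℝ) : ℂ := Complex.exp (2 * π * Complex.I * θ)

lemma Ec_pow (θ : ℝ) (n : ℕ) : Ec θ ^ n = Complex.exp (((2 * π * n * θ : ℝ) : ℂ) * Complex.I) := by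
  rw [Ec, ← Complex.exp_nat_mul]
  congr 1
  push_cast
  ring

lemma abs_Ec (θ : ℝ) : ‖Ec θ‖ = 1 := by
  have := Ec_pow θ 1
  rw [pow_one] at this
  rw [this]
  exact Complex.norm_exp_ofReal_mul_I _

lemma hasSum_log_abs (r θ : ℝ) (hr0 : 0 ≤ r) (hr1 : r < 1) :
    HasSum (fun k : ℕ => -(r ^ k * Real.cos (2 * π * k * θ) / k))
      (Real.log (‖1 - r * Ec θ‖)) := by
  have hz : ‖(r : ℂ) * Ec θ‖ < 1 := by
    rw [norm_mul, abs_Ec, Complex.norm_real, Real.norm_eq_abs,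
      mul_one, abs_of_nonneg hr0]
    exact hr1
  have h := Complex.hasSum_taylorSeries_neg_log hz
  have h2 := (Complex.hasSum_re h).neg
  have hre : (-(-Complex.log (1 - (r:ℂ) * Ec θ)).re) = Real.log (‖1 - r * Ec θ‖) := by
    rw [Complex.neg_re, neg_neg, Complex.log_re]
  rw [hre] at h2
  convert h2 using 2 with n
  · rfl
  rw [show ((r:ℂ) * Ec θ) ^ n = ((r ^ n : ℝ) : ℂ) * Complex.exp (((2 * π * n * θ : ℝ):ℂ) * Complex.I) by
    rw [mul_pow, Ec_pow]; push_cast; ring]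
  rw [show ((r ^ n : ℝ) : ℂ) * Complex.exp (((2 * π * n * θ : ℝ):ℂ) * Complex.I) / (n:ℂ)
      = ((r ^ n / n : ℝ) : ℂ) * Complex.exp (((2 * π * n * θ : ℝ):ℂ) * Complex.I) by
    push_cast; ring]
  rw [Complex.re_ofReal_mul, Complex.exp_ofReal_mul_I_re]
  ring






lemma Ec_continuous : Continuous Ec :=
  Complex.continuous_exp.comp (by continuity)

noncomputable def Lr (r θ : ℝ) : ℝ := Real.log (‖1 - r * Ec θ‖)
noncomputable def ac (r : ℝ) (k : ℕ) (θ : ℝ) : ℝ := -(r ^ k * Real.cos (2 * π * k * θ) / k)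

lemma hasSum_ac (r θ : ℝ) (hr0 : 0 ≤ r) (hr1 : r < 1) :
    HasSum (fun k : ℕ => ac r k θ) (Lr r θ) := hasSum_log_abs r θ hr0 hr1

lemma abs_one_sub_ge (r θ : ℝ) (hr0 : 0 ≤ r) : 1 - r ≤ ‖1 - r * Ec θ‖ := by
  have h := norm_sub_norm_le (1 : ℂ) ((r:ℂ) * Ec θ)
  simp only [norm_one, norm_mul, map_one,
    map_mul, Complex.norm_real, Real.norm_eq_abs, abs_Ec, mul_one] at h
  calc 1 - r ≤ 1 - |r| := by rw [abs_of_nonneg hr0]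
    _ ≤ _ := h

lemma abs_one_sub_le (r θ : ℝ) (hr0 : 0 ≤ r) (hr1 : r ≤ 1) :
    ‖1 - r * Ec θ‖ ≤ 2 := by
  have h := norm_sub_le (1 : ℂ) ((r:ℂ) * Ec θ)
  simp only [norm_one, norm_mul, map_one, map_mul,
    Complex.norm_real, Real.norm_eq_abs, abs_Ec, mul_one] at h
  calc ‖1 - r * Ec θ‖ ≤ 1 + |r| := h
    _ ≤ 2 := by rw [abs_of_nonneg hr0]; linarith

lemma Lr_bound (r θ : ℝ) (hr0 : 0 ≤ r) (hr1 : r < 1) :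
    |Lr r θ| ≤ |Real.log (1 - r)| + Real.log 2 := by
  have h1 : 0 < 1 - r := by linarith
  have hge := abs_one_sub_ge r θ hr0
  have hle := abs_one_sub_le r θ hr0 hr1.le
  have hlog1 : Real.log (1 - r) ≤ Lr r θ := Real.log_le_log h1 hge
  have hlog2 : Lr r θ ≤ Real.log 2 := Real.log_le_log (by linarith) hle
  rw [abs_le]
  constructor
  · calc -(|Real.log (1-r)| + Real.log 2) ≤ -|Real.log (1-r)| := by
            have : (0:ℝ) ≤ Real.log 2 := Real.log_nonneg (by norm_num)
            linarith
      _ ≤ Real.log (1 - r) := neg_abs_le _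
      _ ≤ Lr r θ := hlog1
  · calc Lr r θ ≤ Real.log 2 := hlog2
      _ ≤ |Real.log (1-r)| + Real.log 2 := le_add_of_nonneg_left (abs_nonneg _)

lemma ac_bound (r : ℝ) (hr0 : 0 ≤ r) (k : ℕ) (θ : ℝ) : |ac r k θ| ≤ r ^ k := by
  rcases Nat.eq_zero_or_pos k with rfl | hk
  · simp [ac]
  · rw [ac, abs_neg, abs_div, abs_mul, abs_of_nonneg (pow_nonneg hr0 k), Nat.abs_cast]
    calc r ^ k * |Real.cos (2 * π * k * θ)| / k ≤ r ^ k * 1 / 1 := by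
          apply div_le_div₀ (by positivity) _ one_pos _
          · exact mul_le_mul_of_nonneg_left (Real.abs_cos_le_one _) (pow_nonneg hr0 k)
          · exact_mod_cast hk
      _ = r ^ k := by ring

lemma Lr_continuous (r : ℝ) (hr0 : 0 ≤ r) (hr1 : r < 1) : Continuous (Lr r) := by
  apply Continuous.log
  · exact continuous_norm.comp (continuous_const.sub (continuous_const.mul Ec_continuous))
  · intro θ
    have := abs_one_sub_ge r θ hr0
    intro h
    rw [h] at this
    linarith

lemma ac_continuous (r : ℝ) (k : ℕ) : Continuous (ac r k) := by
  unfold ac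
  continuity

lemma aa_integral (r : ℝ) (j k : ℕ) :
    ∫ θ in Set.Ioc (0:ℝ) 1, ac r j θ * ac r k θ
      = if j = k then r ^ (2*k) / (2 * k^2) else 0 := by
  rw [← intervalIntegral.integral_of_le zero_le_one]
  rcases Nat.eq_zero_or_pos j with rfl | hj
  · rcases eq_or_ne (0:ℕ) k with rfl | hk
    · simp [ac]
    · simp only [ac, pow_zero, Nat.cast_zero, div_zero, neg_zero, one_mul, mul_zero,
        intervalIntegral.integral_zero, CharP.cast_eq_zero, zero_mul]
      rw [if_neg hk]
  rcases Nat.eq_zero_or_pos k with rfl | hk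
  · simp [ac, hj.ne']
  have key : ∀ θ : ℝ, ac r j θ * ac r k θ
      = (r^j * r^k / ((j:ℝ) * k)) * (Real.cos (2*π*j*θ) * Real.cos (2*π*k*θ)) := by
    intro θ; rw [ac, ac]; ring
  simp_rw [key]
  rw [intervalIntegral.integral_const_mul, cos_orth j k hj.ne' hk.ne']
  by_cases h : j = k
  · subst h
    rw [if_pos rfl, if_pos rfl, two_mul, pow_add, sq]
    ring
  · simp [h]

lemma volume_Ioc01 : (volume.restrict (Set.Ioc (0:ℝ) 1)) Set.univ = 1 := by
  rw [Measure.restrict_apply_univ, Real.volume_Ioc]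
  norm_num

lemma integral_Lr_sq (r : ℝ) (hr0 : 0 ≤ r) (hr1 : r < 1) :
    ∫ θ in Set.Ioc (0:ℝ) 1, (Lr r θ)^2 = ∑' k : ℕ, r ^ (2*k) / (2 * k^2) := by
  set μ := volume.restrict (Set.Ioc (0:ℝ) 1) with hμ
  haveI : IsFiniteMeasure μ := ⟨by rw [hμ, volume_Ioc01]; norm_num⟩
  have hμuniv : (μ Set.univ).toReal = 1 := by rw [hμ, volume_Ioc01]; norm_num
  set M := |Real.log (1 - r)| + Real.log 2 with hM
  have hM0 : 0 ≤ M := by positivity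
  have hgeo : Summable (fun k : ℕ => r ^ k) := summable_geometric_of_lt_one hr0 hr1
  have hbd : ∀ (f : ℝ → ℝ) (C : ℝ), 0 ≤ C → Continuous f → (∀ θ, |f θ| ≤ C) →
      ∀ k : ℕ, ∫ θ, ‖f θ * ac r k θ‖ ∂μ ≤ C * r ^ k := by
    intro f C hC hf hfb k
    have hint : Integrable (fun θ => ‖f θ * ac r k θ‖) μ :=
      ((hf.mul (ac_continuous r k)).norm).integrableOn_Ioc
    calc ∫ θ, ‖f θ * ac r k θ‖ ∂μ ≤ ∫ _θ, C * r ^ k ∂μ := by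
          apply integral_mono hint (integrable_const _)
          intro θ
          simp only [Real.norm_eq_abs, abs_mul]
          exact mul_le_mul (hfb θ) (ac_bound r hr0 k θ) (abs_nonneg _) hC
      _ = C * r ^ k := by rw [integral_const, measureReal_def, hμuniv, one_smul]
  have inner : ∀ k : ℕ, ∫ θ, Lr r θ * ac r k θ ∂μ = r ^ (2*k) / (2 * k^2) := by
    intro k
    have hswap := integral_tsum_of_summable_integral_norm
      (μ := μ) (F := fun j θ => ac r j θ * ac r k θ)
      (fun j => ((ac_continuous r j).mul (ac_continuous r k)).integrableOn_Ioc)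
      (Summable.of_nonneg_of_le (fun j => integral_nonneg fun θ => norm_nonneg _)
        (fun j => hbd (ac r j) (r ^ j) (pow_nonneg hr0 j) (ac_continuous r j)
          (fun θ => ac_bound r hr0 j θ) k)
        (hgeo.mul_right _))
    have hpt : ∀ θ, (∑' j, ac r j θ * ac r k θ) = Lr r θ * ac r k θ := fun θ =>
      ((hasSum_ac r θ hr0 hr1).mul_right (ac r k θ)).tsum_eq
    calc ∫ θ, Lr r θ * ac r k θ ∂μ = ∫ θ, ∑' j, ac r j θ * ac r k θ ∂μ := by
          simp_rw [hpt]
      _ = ∑' j, ∫ θ, ac r j θ * ac r k θ ∂μ := hswap.symm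
      _ = ∑' j : ℕ, if j = k then r ^ (2*k) / (2 * k^2) else 0 := by
          apply tsum_congr
          intro j
          exact aa_integral r j k
      _ = r ^ (2*k) / (2 * k^2) := tsum_ite_eq k _
  have houter := integral_tsum_of_summable_integral_norm
    (μ := μ) (F := fun k θ => Lr r θ * ac r k θ)
    (fun k => ((Lr_continuous r hr0 hr1).mul (ac_continuous r k)).integrableOn_Ioc)
    (Summable.of_nonneg_of_le (fun k => integral_nonneg fun θ => norm_nonneg _)
      (fun k => hbd (Lr r) M hM0 (Lr_continuous r hr0 hr1)
        (fun θ => Lr_bound r θ hr0 hr1) k)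
      (hgeo.mul_left _))
  have hpt : ∀ θ, (∑' k, Lr r θ * ac r k θ) = (Lr r θ)^2 := fun θ => by
    rw [((hasSum_ac r θ hr0 hr1).mul_left (Lr r θ)).tsum_eq, sq]
  calc ∫ θ, (Lr r θ)^2 ∂μ = ∫ θ, ∑' k, Lr r θ * ac r k θ ∂μ := by simp_rw [hpt]
    _ = ∑' k, ∫ θ, Lr r θ * ac r k θ ∂μ := houter.symm
    _ = ∑' k : ℕ, r ^ (2*k) / (2 * k^2) := tsum_congr inner





-- normSq computation
lemma abs_sq_one_sub (ρ θ : ℝ) :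
    (‖1 - ρ * Ec θ‖)^2 = 1 - 2 * ρ * Real.cos (2 * π * θ) + ρ^2 := by
  have hE : Ec θ = Complex.exp (((2 * π * θ : ℝ) : ℂ) * Complex.I) := by
    have := Ec_pow θ 1
    rw [pow_one] at this
    rw [this]
    norm_num
  rw [Complex.sq_norm, Complex.normSq_apply, hE]
  rw [Complex.sub_re, Complex.sub_im, Complex.one_re, Complex.one_im,
    Complex.re_ofReal_mul, Complex.im_ofReal_mul,
    Complex.exp_ofReal_mul_I_re, Complex.exp_ofReal_mul_I_im]
  have := Real.sin_sq_add_cos_sq (2 * π * θ)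
  nlinarith [this]

-- |1 - Ec θ| = 2 sin (πθ) on [0,1]
lemma abs_one_sub_Ec (θ : ℝ) (h0 : 0 ≤ θ) (h1 : θ ≤ 1) :
    ‖1 - 1 * Ec θ‖ = 2 * Real.sin (π * θ) := by
  have hs : 0 ≤ Real.sin (π * θ) := by
    apply Real.sin_nonneg_of_nonneg_of_le_pi
    · positivity
    · nlinarith [Real.pi_pos]
  have hsq : (‖1 - 1 * Ec θ‖)^2 = (2 * Real.sin (π * θ))^2 := by
    have ha := abs_sq_one_sub 1 θ
    rw [Complex.ofReal_one] at ha
    rw [ha]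
    have h2 := Real.cos_two_mul (π * θ)
    have h3 := Real.sin_sq_add_cos_sq (π * θ)
    rw [show 2 * π * θ = 2 * (π * θ) by ring, h2]
    nlinarith
  have h4 : (0:ℝ) ≤ ‖1 - 1 * Ec θ‖ := norm_nonneg _
  have h5 : (0:ℝ) ≤ 2 * Real.sin (π * θ) := by linarith
  calc ‖1 - 1 * Ec θ‖ = √((‖1 - 1 * Ec θ‖)^2) := (Real.sqrt_sq h4).symm
    _ = √((2 * Real.sin (π * θ))^2) := by rw [hsq]
    _ = 2 * Real.sin (π * θ) := Real.sqrt_sq h5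

-- (log x)^2 ≤ 16 x^(-1/2) on (0,1]
lemma log_sq_le (x : ℝ) (hx : 0 < x) (hx1 : x ≤ 1) :
    (Real.log x)^2 ≤ 16 * x ^ (-(1/2) : ℝ) := by
  set y := x ^ (-(1/4) : ℝ) with hy
  have hy1 : 1 ≤ y := Real.one_le_rpow_of_pos_of_le_one_of_nonpos hx hx1 (by norm_num)
  have hylog : Real.log y = -(1/4) * Real.log x := Real.log_rpow hx _
  have hly : Real.log y ≤ y := (Real.log_le_sub_one_of_pos (by linarith)).trans (by linarith)
  have hly0 : 0 ≤ Real.log y := Real.log_nonneg hy1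
  have hysq : y^2 = x ^ (-(1/2) : ℝ) := by
    rw [hy, ← Real.rpow_natCast (x ^ (-(1/4):ℝ)) 2, ← Real.rpow_mul hx.le]
    norm_num
  have h1 : (Real.log x)^2 = 16 * (Real.log y)^2 := by rw [hylog]; ring
  rw [h1, ← hysq]
  nlinarith [hly, hly0, hy1]

lemma log_sq_integrable : IntegrableOn (fun x : ℝ => (Real.log x)^2) (Set.Ioc 0 1) := by
  have hg : IntegrableOn (fun x : ℝ => 16 * x ^ (-(1/2) : ℝ)) (Set.Ioc 0 1) := by
    have := intervalIntegral.intervalIntegrable_rpow' (a := 0) (b := 1)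
      (r := (-(1/2):ℝ)) (by norm_num)
    exact ((intervalIntegrable_iff_integrableOn_Ioc_of_le zero_le_one).mp this).const_mul 16
  apply Integrable.mono' hg
  · exact ((Real.measurable_log.pow_const 2).aestronglyMeasurable)
  · refine (ae_restrict_iff' measurableSet_Ioc).mpr (ae_of_all _ fun x hx => ?_)
    rw [Real.norm_eq_abs, abs_of_nonneg (sq_nonneg _)]
    exact log_sq_le x hx.1 hx.2

lemma log_sq_one_sub_integrable :
    IntegrableOn (fun x : ℝ => (Real.log (1 - x))^2) (Set.Ioc 0 1) := by
  have h1 : IntervalIntegrable (fun x : ℝ => (Real.log x)^2) volume 0 1 :=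
    (intervalIntegrable_iff_integrableOn_Ioc_of_le zero_le_one).mpr log_sq_integrable
  have h2 := h1.comp_sub_left 1
  simp only [sub_zero, sub_self] at h2
  exact (intervalIntegrable_iff_integrableOn_Ioc_of_le zero_le_one).mp h2.symm

-- bound for log(2 sin(π t)) on (0, 1/2]
lemma log_two_sin_bound (t : ℝ) (h0 : 0 < t) (h2 : t ≤ 1/2) :
    (Real.log (2 * Real.sin (π * t)))^2 ≤ 2*(Real.log t)^2 + 2*(Real.log (2*π))^2 := by
  have hpi := Real.pi_pos
  have hx0 : 0 < π * t := by positivity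
  have hlow : 2 * t ≤ Real.sin (π * t) := by
    have := Real.mul_le_sin (x := π * t) (by positivity) (by nlinarith)
    calc 2 * t = 2 / π * (π * t) := by field_simp
      _ ≤ Real.sin (π * t) := this
  have hhigh : Real.sin (π * t) ≤ π * t := le_of_lt (Real.sin_lt hx0)
  have h4t : (0:ℝ) < 4 * t := by linarith
  have hL1 : Real.log (4 * t) ≤ Real.log (2 * Real.sin (π * t)) :=
    Real.log_le_log h4t (by linarith)
  have hL2 : Real.log (2 * Real.sin (π * t)) ≤ Real.log (2 * π * t) :=
    Real.log_le_log (by nlinarith) (by nlinarith)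
  rw [show (4:ℝ) * t = 4 * t from rfl] at hL1
  have e1 : Real.log (4 * t) = Real.log 4 + Real.log t := Real.log_mul (by norm_num) h0.ne'
  have e2 : Real.log (2 * π * t) = Real.log (2 * π) + Real.log t :=
    Real.log_mul (by positivity) h0.ne'
  rw [e1] at hL1
  rw [e2] at hL2
  have h4pos : (0:ℝ) ≤ Real.log 4 := Real.log_nonneg (by norm_num)
  have h2pipos : (0:ℝ) ≤ Real.log (2*π) := Real.log_nonneg (by nlinarith)
  have h42pi : Real.log 4 ≤ Real.log (2*π) := Real.log_le_log (by norm_num) (by nlinarith)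
  set L := Real.log (2 * Real.sin (π * t)) with hLdef
  set g := Real.log t with hgdef
  set m := Real.log (2*π) with hmdef
  have hd1 : L - g ≤ m := by linarith
  have hd2 : -m ≤ L - g := by linarith
  have hprod : 0 ≤ m^2 - (L - g)^2 := by nlinarith
  nlinarith [hprod, sq_nonneg (L - 2*g)]

noncomputable def Hb (θ : ℝ) : ℝ :=
  2*(Real.log θ)^2 + 2*(Real.log (1-θ))^2 + 2*(Real.log (2*π))^2

lemma L1_sq_le (θ : ℝ) (hθ : θ ∈ Set.Ioc (0:ℝ) 1) : (Lr 1 θ)^2 ≤ Hb θ := by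
  have hpi := Real.pi_pos
  have h2pipos : (0:ℝ) ≤ Real.log (2*π) := Real.log_nonneg (by nlinarith [Real.pi_gt_three])
  have hL1 : Lr 1 θ = Real.log (2 * Real.sin (π * θ)) := by
    rw [Lr, Complex.ofReal_one, ← abs_one_sub_Ec θ hθ.1.le hθ.2]
  rcases eq_or_lt_of_le hθ.2 with h1 | h1
  · -- θ = 1
    subst h1
    rw [hL1]
    have : Real.sin (π * 1) = 0 := by rw [mul_one]; exact Real.sin_pi
    rw [this, mul_zero, Real.log_zero]
    have hnn : (0:ℝ) ≤ Hb 1 := by rw [Hb]; positivity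
    simpa using hnn
  rcases le_or_gt θ (1/2) with hc | hc
  · rw [hL1]
    calc (Real.log (2 * Real.sin (π * θ)))^2
        ≤ 2*(Real.log θ)^2 + 2*(Real.log (2*π))^2 := log_two_sin_bound θ hθ.1 hc
      _ ≤ Hb θ := by rw [Hb]; nlinarith [sq_nonneg (Real.log (1-θ))]
  · have hsym : Real.sin (π * θ) = Real.sin (π * (1 - θ)) := by
      rw [show π * (1 - θ) = π - π * θ by ring, Real.sin_pi_sub]
    rw [hL1, hsym]
    calc (Real.log (2 * Real.sin (π * (1-θ))))^2
        ≤ 2*(Real.log (1-θ))^2 + 2*(Real.log (2*π))^2 :=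
          log_two_sin_bound (1-θ) (by linarith) (by linarith)
      _ ≤ Hb θ := by rw [Hb]; nlinarith [sq_nonneg (Real.log θ)]

lemma Hb_integrable : IntegrableOn Hb (Set.Ioc (0:ℝ) 1) := by
  haveI : IsFiniteMeasure (volume.restrict (Set.Ioc (0:ℝ) 1)) :=
    ⟨by rw [Measure.restrict_apply_univ, Real.volume_Ioc]; norm_num⟩
  exact ((log_sq_integrable.const_mul 2).add (log_sq_one_sub_integrable.const_mul 2)).add
    (integrable_const _)

lemma L1_measurable : Measurable (fun θ => Lr 1 θ) := by
  apply Real.measurable_log.comp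
  exact continuous_norm.comp
    (continuous_const.sub (continuous_const.mul
      (Complex.continuous_exp.comp (by continuity)))) |>.measurable

lemma L1_sq_integrable : IntegrableOn (fun θ => (Lr 1 θ)^2) (Set.Ioc (0:ℝ) 1) := by
  apply Integrable.mono' Hb_integrable
  · exact ((L1_measurable.pow_const 2).aestronglyMeasurable)
  · refine (ae_restrict_iff' measurableSet_Ioc).mpr (ae_of_all _ fun θ hθ => ?_)
    rw [Real.norm_eq_abs, abs_of_nonneg (sq_nonneg _)]
    exact L1_sq_le θ hθ

-- domination: for 1/2 ≤ r < 1 and |1 - Ec θ| > 0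
lemma Lr_sq_dominated (r θ : ℝ) (hr : 1/2 ≤ r) (hr1 : r ≤ 1)
    (habs : 0 < ‖1 - 1 * Ec θ‖) :
    (Lr r θ)^2 ≤ 2*(Lr 1 θ)^2 + 2*(Real.log 2)^2 := by
  have hc1 : Real.cos (2 * π * θ) ≤ 1 := Real.cos_le_one _
  have hkey : (‖1 - 1 * Ec θ‖)^2 ≤ (2 * ‖1 - r * Ec θ‖)^2 := by
    have e1 := abs_sq_one_sub 1 θ
    rw [Complex.ofReal_one] at e1
    have e2 := abs_sq_one_sub r θ
    rw [mul_pow]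
    rw [e1, e2]
    nlinarith [sq_nonneg (r - 1), abs_sq_one_sub r θ, norm_nonneg (1 - (r:ℂ) * Ec θ),
      sq_nonneg (‖1 - (r:ℂ) * Ec θ‖)]
  have habs2 : 0 ≤ 2 * ‖1 - (r:ℂ) * Ec θ‖ := by positivity
  have hle : ‖1 - 1 * Ec θ‖ ≤ 2 * ‖1 - r * Ec θ‖ := by
    calc ‖1 - 1 * Ec θ‖ = √((‖1 - 1 * Ec θ‖)^2) :=
          (Real.sqrt_sq habs.le).symm
      _ ≤ √((2 * ‖1 - r * Ec θ‖)^2) := Real.sqrt_le_sqrt hkey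
      _ = 2 * ‖1 - r * Ec θ‖ := Real.sqrt_sq habs2
  have habsr : 0 < ‖1 - (r:ℝ) * Ec θ‖ := by nlinarith
  -- lower bound : Lr 1 θ - log 2 ≤ Lr r θ
  have hlow : Lr 1 θ - Real.log 2 ≤ Lr r θ := by
    rw [Lr, Lr]
    have h3 : Real.log (‖1 - (1:ℝ) * Ec θ‖) ≤
        Real.log (2 * ‖1 - (r:ℝ) * Ec θ‖) := by
      apply Real.log_le_log _ _
      · rwa [Complex.ofReal_one]
      · rw [Complex.ofReal_one]; exact hle
    rw [Real.log_mul two_ne_zero habsr.ne'] at h3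
    linarith
  -- upper bound
  have hupp : Lr r θ ≤ Real.log 2 :=
    Real.log_le_log habsr (abs_one_sub_le r θ (by linarith) hr1)
  have hm0 : (0:ℝ) ≤ Real.log 2 := Real.log_nonneg one_le_two
  nlinarith [mul_nonneg (sub_nonneg.2 hupp) (sub_nonneg.2 hlow),
    sq_nonneg (Lr 1 θ + Real.log 2), sq_nonneg (Lr 1 θ - Real.log 2), hm0,
    sq_nonneg (Lr r θ)]




noncomputable def rn (n : ℕ) : ℝ := 1 - ((n:ℝ) + 2)⁻¹

lemma rn_ge (n : ℕ) : 1/2 ≤ rn n := by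
  rw [rn]
  have h2 : (2:ℝ) ≤ (n:ℝ) + 2 := by linarith [show (0:ℝ) ≤ (n:ℝ) from n.cast_nonneg]
  have h : ((n:ℝ) + 2)⁻¹ ≤ 2⁻¹ := inv_anti₀ (by norm_num) h2
  have h' : ((n:ℝ) + 2)⁻¹ ≤ 1/2 := by rwa [one_div]
  linarith

lemma rn_lt_one (n : ℕ) : rn n < 1 := by
  rw [rn]
  have : (0:ℝ) < ((n:ℝ) + 2)⁻¹ := by positivity
  linarith

lemma rn_nonneg (n : ℕ) : 0 ≤ rn n := le_trans (by norm_num) (rn_ge n)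

lemma rn_tendsto : Tendsto rn atTop (𝓝 1) := by
  have h1 : Tendsto (fun n : ℕ => ((n:ℝ) + 2)) atTop atTop :=
    tendsto_atTop_add_const_right _ 2 tendsto_natCast_atTop_atTop
  have h2 : Tendsto (fun n : ℕ => ((n:ℝ) + 2)⁻¹) atTop (𝓝 0) := h1.inv_tendsto_atTop
  have := tendsto_const_nhds.sub h2 (f := fun _ : ℕ => (1:ℝ))
  exact (by simpa using this : Tendsto (fun n : ℕ => 1 - ((n:ℝ) + 2)⁻¹) atTop (𝓝 1))

lemma Ec_ne_one (θ : ℝ) (h0 : 0 < θ) (h1 : θ < 1) : Ec θ ≠ 1 := by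
  rw [Ec]
  intro h
  rw [Complex.exp_eq_one_iff] at h
  obtain ⟨m, hm⟩ := h
  have : (θ:ℂ) = (m:ℂ) := by
    have hne : (2 * (π:ℂ) * Complex.I) ≠ 0 :=
      mul_ne_zero (mul_ne_zero two_ne_zero (Complex.ofReal_ne_zero.mpr Real.pi_ne_zero))
        Complex.I_ne_zero
    rw [show 2 * (π:ℂ) * Complex.I * θ = θ * (2 * π * Complex.I) by ring] at hm
    exact mul_right_cancel₀ hne hm
  have hθm : θ = (m:ℝ) := by exact_mod_cast this
  rw [hθm] at h0 h1
  have h0' : 0 < m := by exact_mod_cast h0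
  have h1' : m < 1 := by exact_mod_cast h1
  omega

lemma abs_pos_of_Ioo (θ : ℝ) (h0 : 0 < θ) (h1 : θ < 1) :
    0 < ‖1 - 1 * Ec θ‖ := by
  rw [one_mul]
  apply norm_pos_iff.mpr
  rw [sub_ne_zero]
  exact fun h => Ec_ne_one θ h0 h1 h.symm

lemma hz_sum : HasSum (fun k : ℕ => 1/(2*(k:ℝ)^2)) (π^2/12) := by
  have h := hasSum_zeta_two.div_const 2
  rw [show (π^2/6)/2 = π^2/12 by ring] at h
  convert h using 2 with k
  · rfl
  rw [div_div, mul_comm]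

lemma tendsto_series : Tendsto (fun n => ∑' k : ℕ, (rn n) ^ (2*k) / (2 * (k:ℝ)^2))
    atTop (𝓝 (π^2/12)) := by
  have h := tendsto_tsum_of_dominated_convergence
    (f := fun (n : ℕ) (k : ℕ) => (rn n) ^ (2*k) / (2 * (k:ℝ)^2))
    (g := fun k : ℕ => 1 / (2 * (k:ℝ)^2))
    (bound := fun k : ℕ => 1 / (2 * (k:ℝ)^2))
    hz_sum.summable
    (fun k => by
      have := (rn_tendsto.pow (2*k)).div_const (2 * (k:ℝ)^2)
      simpa using this)
    (Eventually.of_forall fun n => by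
      intro k
      rcases Nat.eq_zero_or_pos k with rfl | hk
      · simp
      · have hkpos : (0:ℝ) < 2 * (k:ℝ)^2 := by positivity
        rw [Real.norm_eq_abs, abs_div, abs_of_nonneg (pow_nonneg (rn_nonneg n) _),
          abs_of_pos hkpos]
        exact (div_le_div_iff_of_pos_right hkpos).mpr (pow_le_one₀ (rn_nonneg n) (rn_lt_one n).le))
  rw [hz_sum.tsum_eq] at h
  exact h

lemma ae_Ioo : ∀ᵐ θ ∂(volume.restrict (Set.Ioc (0:ℝ) 1)), θ ∈ Set.Ioo (0:ℝ) 1 := by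
  have h1 : ∀ᵐ θ ∂(volume.restrict (Set.Ioc (0:ℝ) 1)), θ ∈ Set.Ioc (0:ℝ) 1 :=
    ae_restrict_mem measurableSet_Ioc
  have h2 : ∀ᵐ (θ : ℝ), θ ≠ 1 := by
    rw [ae_iff]
    have : {a : ℝ | ¬a ≠ 1} = {1} := by ext a; simp
    rw [this]
    exact Real.volume_singleton
  filter_upwards [h1, ae_restrict_of_ae h2] with θ hθ hne
  exact ⟨hθ.1, lt_of_le_of_ne hθ.2 hne⟩

lemma tendsto_integrals :
    Tendsto (fun n => ∫ θ in Set.Ioc (0:ℝ) 1, (Lr (rn n) θ)^2) atTop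
      (𝓝 (∫ θ in Set.Ioc (0:ℝ) 1, (Lr 1 θ)^2)) := by
  haveI : IsFiniteMeasure (volume.restrict (Set.Ioc (0:ℝ) 1)) :=
    ⟨by rw [Measure.restrict_apply_univ, Real.volume_Ioc]; norm_num⟩
  apply tendsto_integral_of_dominated_convergence
    (bound := fun θ => 2*(Lr 1 θ)^2 + 2*(Real.log 2)^2)
  · intro n
    exact ((Lr_continuous (rn n) (rn_nonneg n) (rn_lt_one n)).pow 2).aestronglyMeasurable
  · exact (L1_sq_integrable.const_mul 2).add (integrable_const _)
  · intro n
    filter_upwards [ae_Ioo] with θ hθ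
    rw [Real.norm_eq_abs, abs_of_nonneg (sq_nonneg _)]
    exact Lr_sq_dominated (rn n) θ (rn_ge n) (rn_lt_one n).le (abs_pos_of_Ioo θ hθ.1 hθ.2)
  · filter_upwards [ae_Ioo] with θ hθ
    have habs : 0 < ‖1 - ((1:ℝ):ℂ) * Ec θ‖ := by
      rw [Complex.ofReal_one]
      exact abs_pos_of_Ioo θ hθ.1 hθ.2
    have hc1 : Continuous (fun r : ℝ => ‖1 - (r:ℂ) * Ec θ‖) :=
      continuous_norm.comp
        (continuous_const.sub (Complex.continuous_ofReal.mul continuous_const))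
    have hca : ContinuousAt (fun r : ℝ => Lr r θ) 1 :=
      ContinuousAt.comp (g := Real.log) (f := fun r : ℝ => ‖1 - (r:ℂ) * Ec θ‖)
        (x := (1:ℝ)) (Real.continuousAt_log habs.ne') hc1.continuousAt
    have hct : ContinuousAt (fun r : ℝ => (Lr r θ)^2) 1 := hca.pow 2
    exact (hct.tendsto).comp rn_tendsto

lemma integral_L1_sq : ∫ θ in Set.Ioc (0:ℝ) 1, (Lr 1 θ)^2 = π^2/12 := by
  have h1 := tendsto_integrals
  have heq : (fun n => ∫ θ in Set.Ioc (0:ℝ) 1, (Lr (rn n) θ)^2)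
      = fun n => ∑' k : ℕ, (rn n) ^ (2*k) / (2 * (k:ℝ)^2) := by
    funext n
    exact integral_Lr_sq (rn n) (rn_nonneg n) (rn_lt_one n)
  rw [heq] at h1
  exact tendsto_nhds_unique h1 tendsto_series

open Real in
theorem m2_x_sub_one :
    ∫ θ in (0:ℝ)..1,
        (Real.log ‖Complex.exp (2 * π * Complex.I * θ) - 1‖)^2 = π^2 / 12 := by
  have hpt : ∀ θ : ℝ, (Real.log (‖Complex.exp (2 * π * Complex.I * θ) - 1‖))^2
      = (Lr 1 θ)^2 := by
    intro θ
    rw [Lr, Complex.ofReal_one, one_mul, norm_sub_rev]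
    rfl
  simp_rw [hpt]
  rw [intervalIntegral.integral_of_le zero_le_one]
  exact integral_L1_sq
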